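/- Consider the discrete-time linear system with arbitrary initial state x0 ∈ F^N and pilot input u[n] = Σ_{k=1}^{m} e_k·1{n = (2N+1)k}, with output sequence y. Then scalars α_0, ..., α_N ∈ F satisfy Σ_{j=0}^{N} α_j · y[j+τ] = 0 for every τ of the form τ = (2N+1)p + τ̃ with 0 ≤ p ≤ m and 1 ≤ τ̃ ≤ N, if and only if the polynomial P(t) = Σ_{k=0}^{N} α_k t^k satisfies both C·P(A)·A^τ·B = 0 for all natural numbers τ and C·P(A)·A^{τ+1}·x0 = 0 for all natural numbers τ. -/

import Mathlib

open Matrix Finset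

/-- State sequence of the discrete-time linear system:
`x[0] = x0`, `x[n+1] = A·x[n] + B·u[n]`. -/
def stateSeq {F : Type*} [Field F] {N m : ℕ} (A : Matrix (Fin N) (Fin N) F)
    (B : Matrix (Fin N) (Fin m) F) (x0 : Fin N → F) (u : ℤ → Fin m → F) :
    ℕ → Fin N → F
  | 0 => x0
  | n + 1 => A.mulVec (stateSeq A B x0 u n) + B.mulVec (u n)

/-- Output sequence of the system: `y[n] = C·x[n] + D·u[n]` for `n ≥ 0`,
and `y[n] = 0` for `n < 0`. -/
def outSeq {F : Type*} [Field F] {N m l : ℕ} (A : Matrix (Fin N) (Fin N) F)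
    (B : Matrix (Fin N) (Fin m) F) (C : Matrix (Fin l) (Fin N) F)
    (D : Matrix (Fin l) (Fin m) F) (x0 : Fin N → F) (u : ℤ → Fin m → F)
    (n : ℤ) : Fin l → F :=
  if n < 0 then 0 else C.mulVec (stateSeq A B x0 u n.toNat) + D.mulVec (u n)

/-- The pilot input sequence of Algorithm 2:
`u[n] = Σ_{k=1}^{m} e_k · 1{n = (2N+1)k}`. -/
def pilot (F : Type*) [Field F] (N m : ℕ) : ℤ → Fin m → F := fun n =>
  ∑ k : Fin m, if n = ((2 * N + 1) * ((k : ℕ) + 1) : ℕ) then Pi.single k 1 else 0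

section helpers

variable {F : Type*} [Field F]

lemma mulVec_sum' {l n : ℕ} {ι : Type*} (M : Matrix (Fin l) (Fin n) F) (s : Finset ι)
    (v : ι → Fin n → F) : M *ᵥ (∑ i ∈ s, v i) = ∑ i ∈ s, M *ᵥ v i := by
  classical
  induction s using Finset.induction with
  | empty => simp
  | insert _ _ h ih => rw [Finset.sum_insert h, Finset.sum_insert h, Matrix.mulVec_add, ih]

lemma sum_mulVec' {l n : ℕ} {ι : Type*} (s : Finset ι) (M : ι → Matrix (Fin l) (Fin n) F)
    (v : Fin n → F) : (∑ i ∈ s, M i) *ᵥ v = ∑ i ∈ s, M i *ᵥ v := by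
  classical
  induction s using Finset.induction with
  | empty => simp
  | insert _ _ h ih => rw [Finset.sum_insert h, Finset.sum_insert h, Matrix.add_mulVec, ih]

/-- Cayley–Hamilton extension: a linear functional vanishing on `A^0, …, A^(n-1)`
vanishes on all powers of `A`. -/
lemma key_pow {n : ℕ} {W : Type*} [AddCommGroup W] [Module F W]
    (A : Matrix (Fin n) (Fin n) F) (f : Matrix (Fin n) (Fin n) F →ₗ[F] W)
    (h : ∀ i < n, f (A ^ i) = 0) : ∀ τ, f (A ^ τ) = 0 := by
  have hd : A.charpoly.natDegree = n := by
    rw [Matrix.charpoly_natDegree_eq_dim, Fintype.card_fin]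
  have hCH : A ^ n = ∑ i ∈ Finset.range n, (-(A.charpoly.coeff i)) • A ^ i := by
    have h0 := Matrix.aeval_self_charpoly A
    rw [Polynomial.aeval_eq_sum_range, hd, Finset.sum_range_succ] at h0
    have hc : A.charpoly.coeff n = 1 := by
      have := (Matrix.charpoly_monic A).coeff_natDegree
      rwa [hd] at this
    rw [hc, one_smul] at h0
    have h1 : A ^ n = -(∑ i ∈ Finset.range n, A.charpoly.coeff i • A ^ i) :=
      eq_neg_of_add_eq_zero_right h0
    rw [h1, ← Finset.sum_neg_distrib]
    exact Finset.sum_congr rfl fun i _ => (neg_smul _ _).symm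
  intro τ
  induction τ using Nat.strong_induction_on with
  | _ τ ih =>
    rcases lt_or_ge τ n with hτ | hτ
    · exact h τ hτ
    · have hτ' : τ = (τ - n) + n := by omega
      rw [hτ', pow_add, hCH, Finset.mul_sum, map_sum]
      apply Finset.sum_eq_zero
      intro i hi
      rw [Finset.mem_range] at hi
      rw [mul_smul_comm, ← pow_add, f.map_smul, ih ((τ - n) + i) (by omega)]
      simp

lemma comb {N l : ℕ} (A : Matrix (Fin N) (Fin N) F) (C : Matrix (Fin l) (Fin N) F)
    (α : ℕ → F) (d : ℕ) (v : Fin N → F) :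
    ∑ j ∈ Finset.range (N + 1), α j • (C * A ^ (d + j)) *ᵥ v =
      (C * (∑ k ∈ Finset.range (N + 1), α k • A ^ k) * A ^ d) *ᵥ v := by
  rw [Matrix.mul_sum, Matrix.sum_mul, sum_mulVec']
  apply Finset.sum_congr rfl
  intro k _
  rw [Matrix.mul_smul, Matrix.smul_mul, Matrix.smul_mulVec, Matrix.mul_assoc,
    ← pow_add, Nat.add_comm k d]

lemma y_formula {N m l : ℕ} (A : Matrix (Fin N) (Fin N) F)
    (B : Matrix (Fin N) (Fin m) F) (C : Matrix (Fin l) (Fin N) F)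
    (D : Matrix (Fin l) (Fin m) F) (x0 : Fin N → F) (p s : ℕ)
    (hs1 : 1 ≤ s) (hs2 : s ≤ 2 * N) :
    outSeq A B C D x0 (pilot F N m) (((2 * N + 1) * p + s : ℕ) : ℤ) =
      (C * A ^ ((2 * N + 1) * p + s)) *ᵥ x0 +
      ∑ k : Fin m, if (k : ℕ) + 1 ≤ p then
        (C * A ^ ((2 * N + 1) * (p - 1 - (k : ℕ)) + (s - 1)) * B) *ᵥ Pi.single k 1
      else 0 := by
  classical
  set n := (2 * N + 1) * p + s with hn
  -- `n` is never a spike time of the pilot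
  have hmod : ∀ k : ℕ, n ≠ (2 * N + 1) * (k + 1) := by
    intro k hk
    rcases Nat.lt_or_ge p (k + 1) with h1 | h1
    · obtain ⟨r, hr⟩ := Nat.exists_eq_add_of_lt h1
      rw [hr] at hk
      have he : (2 * N + 1) * (p + r + 1) = (2 * N + 1) * p + (2 * N + 1) * (r + 1) := by ring
      rw [he] at hk
      have hb : 2 * N + 1 ≤ (2 * N + 1) * (r + 1) := Nat.le_mul_of_pos_right _ (by omega)
      omega
    · have : (2 * N + 1) * (k + 1) ≤ (2 * N + 1) * p := Nat.mul_le_mul_left _ h1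
      omega
  have hlt : ∀ k : ℕ, ((2 * N + 1) * (k + 1) < n ↔ k + 1 ≤ p) := by
    intro k
    constructor
    · intro hc
      by_contra hcon
      have h1 : p + 1 ≤ k + 1 := by omega
      have : (2 * N + 1) * (p + 1) ≤ (2 * N + 1) * (k + 1) := Nat.mul_le_mul_left _ h1
      have he : (2 * N + 1) * (p + 1) = (2 * N + 1) * p + (2 * N + 1) := by ring
      omega
    · intro hc
      have : (2 * N + 1) * (k + 1) ≤ (2 * N + 1) * p := Nat.mul_le_mul_left _ hc
      omega
  have hexp : ∀ k : ℕ, k + 1 ≤ p →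
      n - 1 - (2 * N + 1) * (k + 1) = (2 * N + 1) * (p - 1 - k) + (s - 1) := by
    intro k hk
    obtain ⟨q, hq⟩ : ∃ q, p = (k + 1) + q := ⟨p - (k + 1), by omega⟩
    have hq2 : p - 1 - k = q := by omega
    have he : (2 * N + 1) * (k + 1 + q) = (2 * N + 1) * (k + 1) + (2 * N + 1) * q := by ring
    rw [hq2, hn, hq, he]
    omega
  have hDu : D *ᵥ pilot F N m ((n : ℕ) : ℤ) = 0 := by
    have hz : pilot F N m ((n : ℕ) : ℤ) = 0 := by
      rw [pilot]
      apply Finset.sum_eq_zero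
      intro k _
      rw [if_neg]
      intro hc
      exact hmod (k : ℕ) (by exact_mod_cast hc)
    rw [hz, Matrix.mulVec_zero]
  rw [outSeq, if_neg (by simp), Int.toNat_natCast, hDu, add_zero]
  have hstate : ∀ nn : ℕ, stateSeq A B x0 (pilot F N m) nn =
      (A ^ nn) *ᵥ x0 + ∑ i ∈ Finset.range nn, ((A ^ (nn - 1 - i)) * B) *ᵥ pilot F N m i := by
    intro nn
    induction nn with
    | zero => simp [stateSeq]
    | succ nn ih =>
      rw [stateSeq, ih, Matrix.mulVec_add, Matrix.mulVec_mulVec, ← pow_succ',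
        Finset.sum_range_succ, mulVec_sum']
      have h1 : ∀ i ∈ Finset.range nn,
          A *ᵥ ((A ^ (nn - 1 - i) * B) *ᵥ pilot F N m i) =
          (A ^ (nn + 1 - 1 - i) * B) *ᵥ pilot F N m i := by
        intro i hi
        rw [Finset.mem_range] at hi
        rw [Matrix.mulVec_mulVec, ← Matrix.mul_assoc, ← pow_succ']
        have : nn - 1 - i + 1 = nn + 1 - 1 - i := by omega
        rw [this]
      rw [Finset.sum_congr rfl h1]
      have h2 : (A ^ (nn + 1 - 1 - nn) * B) *ᵥ pilot F N m nn = B *ᵥ pilot F N m nn := by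
        have : nn + 1 - 1 - nn = 0 := by omega
        rw [this, pow_zero, Matrix.one_mul]
      rw [h2]
      abel
  rw [hstate, Matrix.mulVec_add, Matrix.mulVec_mulVec, mulVec_sum']
  congr 1
  have step1 : ∀ i ∈ Finset.range n,
      C *ᵥ ((A ^ (n - 1 - i) * B) *ᵥ pilot F N m i) =
      ∑ k : Fin m, if i = (2 * N + 1) * ((k : ℕ) + 1) then
        (C * A ^ (n - 1 - i) * B) *ᵥ Pi.single k 1 else 0 := by
    intro i _
    rw [Matrix.mulVec_mulVec, ← Matrix.mul_assoc, pilot, mulVec_sum']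
    apply Finset.sum_congr rfl
    intro k _
    rw [apply_ite (fun w => (C * A ^ (n - 1 - i) * B) *ᵥ w), Matrix.mulVec_zero]
    congr 1
    exact propext Nat.cast_inj
  rw [Finset.sum_congr rfl step1, Finset.sum_comm]
  apply Finset.sum_congr rfl
  intro k _
  rw [Finset.sum_ite_eq' (Finset.range n) ((2 * N + 1) * ((k : ℕ) + 1))
    (fun i => (C * A ^ (n - 1 - i) * B) *ᵥ Pi.single k 1)]
  simp only [Finset.mem_range]
  by_cases hkp : (k : ℕ) + 1 ≤ p
  · rw [if_pos ((hlt (k : ℕ)).mpr hkp), if_pos hkp, hexp (k : ℕ) hkp]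
  · rw [if_neg (fun hc => hkp ((hlt (k : ℕ)).mp hc)), if_neg hkp]

end helpers

/-- with arbitrary initial state and the pilot input, the scalars
`α_0, …, α_N` satisfy `Σ_{j=0}^{N} α_j·y[j+τ] = 0` for all
`τ = (2N+1)p + τ̃`, `0 ≤ p ≤ m`, `1 ≤ τ̃ ≤ N`, iff the polynomial
`P(t) = Σ_k α_k t^k` satisfies `C·P(A)·A^τ·B = 0` and `C·P(A)·A^{τ+1}·x0 = 0`
for all natural `τ`. -/
theorem stmt12 {F : Type*} [Field F] {N m l : ℕ} (A : Matrix (Fin N) (Fin N) F)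
    (B : Matrix (Fin N) (Fin m) F) (C : Matrix (Fin l) (Fin N) F)
    (D : Matrix (Fin l) (Fin m) F) (x0 : Fin N → F) (α : ℕ → F) :
    (∀ p ≤ m, ∀ τ' : ℕ, 1 ≤ τ' → τ' ≤ N →
        ∑ j ∈ Finset.range (N + 1),
          α j • outSeq A B C D x0 (pilot F N m) (((2 * N + 1) * p + τ' + j : ℕ)) = 0) ↔
      ((∀ τ : ℕ, C * (∑ k ∈ Finset.range (N + 1), α k • A ^ k) * A ^ τ * B = 0) ∧
       (∀ τ : ℕ,
        (C * (∑ k ∈ Finset.range (N + 1), α k • A ^ k) * A ^ (τ + 1)).mulVec x0 = 0)) := by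
  classical
  set P := ∑ k ∈ Finset.range (N + 1), α k • A ^ k with hP
  have key_eq : ∀ p τ' : ℕ, 1 ≤ τ' → τ' ≤ N →
      ∑ j ∈ Finset.range (N + 1),
          α j • outSeq A B C D x0 (pilot F N m) (((2 * N + 1) * p + τ' + j : ℕ)) =
      (C * P * A ^ ((2 * N + 1) * p + τ')) *ᵥ x0 +
      ∑ k : Fin m, (if (k : ℕ) + 1 ≤ p then
        (C * P * A ^ ((2 * N + 1) * (p - 1 - (k : ℕ)) + (τ' - 1)) * B) *ᵥ Pi.single k 1
      else 0) := by
    intro p τ' h1 h2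
    have hy : ∀ j ∈ Finset.range (N + 1),
        α j • outSeq A B C D x0 (pilot F N m) (((2 * N + 1) * p + τ' + j : ℕ)) =
        α j • ((C * A ^ ((2 * N + 1) * p + τ' + j)) *ᵥ x0 +
          ∑ k : Fin m, if (k : ℕ) + 1 ≤ p then
            (C * A ^ ((2 * N + 1) * (p - 1 - (k : ℕ)) + (τ' - 1) + j) * B) *ᵥ Pi.single k 1
          else 0) := by
      intro j hj
      rw [Finset.mem_range] at hj
      have hf := y_formula A B C D x0 p (τ' + j) (by omega) (by omega)
      have e1 : (2 * N + 1) * p + (τ' + j) = (2 * N + 1) * p + τ' + j := by omega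
      have e2 : ∀ k : ℕ, (2 * N + 1) * (p - 1 - k) + (τ' + j - 1) =
          (2 * N + 1) * (p - 1 - k) + (τ' - 1) + j := by intro k; omega
      rw [e1] at hf
      rw [hf]
      congr 2
      apply Finset.sum_congr rfl
      intro k _
      rw [e2 (k : ℕ)]
    rw [Finset.sum_congr rfl hy]
    have hsplit : ∀ j ∈ Finset.range (N + 1),
        α j • ((C * A ^ ((2 * N + 1) * p + τ' + j)) *ᵥ x0 +
          ∑ k : Fin m, if (k : ℕ) + 1 ≤ p then
            (C * A ^ ((2 * N + 1) * (p - 1 - (k : ℕ)) + (τ' - 1) + j) * B) *ᵥ Pi.single k 1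
          else 0) =
        α j • ((C * A ^ ((2 * N + 1) * p + τ' + j)) *ᵥ x0) +
        ∑ k : Fin m, (if (k : ℕ) + 1 ≤ p then
            α j • ((C * A ^ ((2 * N + 1) * (p - 1 - (k : ℕ)) + (τ' - 1) + j) * B) *ᵥ
              Pi.single k 1) else 0) := by
      intro j _
      rw [smul_add, Finset.smul_sum]
      congr 1
      apply Finset.sum_congr rfl
      intro k _
      rw [smul_ite, smul_zero]
    rw [Finset.sum_congr rfl hsplit, Finset.sum_add_distrib]
    congr 1
    · exact comb A C α ((2 * N + 1) * p + τ') x0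
    · rw [Finset.sum_comm]
      apply Finset.sum_congr rfl
      intro k _
      by_cases hkp : (k : ℕ) + 1 ≤ p
      · simp only [if_pos hkp]
        have hv : ∀ d : ℕ, (C * A ^ d * B) *ᵥ (Pi.single k 1 : Fin m → F) =
            (C * A ^ d) *ᵥ (B *ᵥ Pi.single k 1) := by
          intro d
          rw [Matrix.mulVec_mulVec]
        calc ∑ j ∈ Finset.range (N + 1),
              α j • ((C * A ^ ((2 * N + 1) * (p - 1 - (k : ℕ)) + (τ' - 1) + j) * B) *ᵥ
                Pi.single k 1)
            = ∑ j ∈ Finset.range (N + 1),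
              α j • ((C * A ^ ((2 * N + 1) * (p - 1 - (k : ℕ)) + (τ' - 1) + j)) *ᵥ
                (B *ᵥ Pi.single k 1)) := by
              apply Finset.sum_congr rfl; intro j _; rw [hv]
          _ = (C * P * A ^ ((2 * N + 1) * (p - 1 - (k : ℕ)) + (τ' - 1))) *ᵥ
                (B *ᵥ Pi.single k 1) := comb A C α _ _
          _ = (C * P * A ^ ((2 * N + 1) * (p - 1 - (k : ℕ)) + (τ' - 1)) * B) *ᵥ
                Pi.single k 1 := Matrix.mulVec_mulVec _ _ _
      · simp only [if_neg hkp, Finset.sum_const_zero]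
  constructor
  · intro H
    have Hf : ∀ p ≤ m, ∀ τ' : ℕ, 1 ≤ τ' → τ' ≤ N →
        (C * P * A ^ ((2 * N + 1) * p + τ')) *ᵥ x0 +
        ∑ k : Fin m, (if (k : ℕ) + 1 ≤ p then
          (C * P * A ^ ((2 * N + 1) * (p - 1 - (k : ℕ)) + (τ' - 1)) * B) *ᵥ Pi.single k 1
        else 0) = 0 := by
      intro p hp τ' h1 h2
      rw [← key_eq p τ' h1 h2]
      exact H p hp τ' h1 h2
    -- x0 statement
    have Hx0 : ∀ τ : ℕ, (C * P * A ^ (τ + 1)) *ᵥ x0 = 0 := by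
      let f : Matrix (Fin N) (Fin N) F →ₗ[F] (Fin l → F) :=
        { toFun := fun X => (C * P * (X * A)) *ᵥ x0
          map_add' := fun X Y => by
            rw [Matrix.add_mul, Matrix.mul_add, Matrix.add_mulVec]
          map_smul' := fun c X => by
            rw [Matrix.smul_mul, Matrix.mul_smul, Matrix.smul_mulVec]
            rfl }
      have hbase : ∀ i < N, f (A ^ i) = 0 := by
        intro i hi
        have h5 := Hf 0 (Nat.zero_le m) (i + 1) (by omega) (by omega)
        have hz : ∀ k : Fin m, (if (k : ℕ) + 1 ≤ 0 then
            (C * P * A ^ ((2 * N + 1) * (0 - 1 - (k : ℕ)) + (i + 1 - 1)) * B) *ᵥ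
              Pi.single k 1 else 0) = 0 := by
          intro k; rw [if_neg (by omega)]
        rw [Finset.sum_congr rfl (fun k _ => hz k), Finset.sum_const_zero, add_zero] at h5
        show (C * P * (A ^ i * A)) *ᵥ x0 = 0
        rw [← pow_succ]
        have e : (2 * N + 1) * 0 + (i + 1) = i + 1 := by omega
        rw [e] at h5
        exact h5
      intro τ
      have := key_pow A f hbase τ
      show (C * P * A ^ (τ + 1)) *ᵥ x0 = 0
      rw [pow_succ]
      exact this
    have HB : ∀ q : ℕ, ∀ k : Fin m, (k : ℕ) < q → ∀ τ : ℕ,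
        (C * P * A ^ τ * B) *ᵥ (Pi.single k 1 : Fin m → F) = 0 := by
      intro q
      induction q with
      | zero => intro k hk; omega
      | succ q ih =>
        intro k hk
        rcases lt_or_ge (k : ℕ) q with h | h
        · exact ih k h
        have hkq : (k : ℕ) = q := by omega
        let f : Matrix (Fin N) (Fin N) F →ₗ[F] (Fin l → F) :=
          { toFun := fun X => (C * P * X * B) *ᵥ (Pi.single k 1 : Fin m → F)
            map_add' := fun X Y => by
              rw [Matrix.mul_add, Matrix.add_mul, Matrix.add_mulVec]
            map_smul' := fun c X => by
              rw [Matrix.mul_smul, Matrix.smul_mul, Matrix.smul_mulVec]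
              rfl }
        have hbase : ∀ i < N, f (A ^ i) = 0 := by
          intro i hi
          have hq : q + 1 ≤ m := by have := k.isLt; omega
          have h5 := Hf (q + 1) hq (i + 1) (by omega) (by omega)
          rw [Finset.sum_eq_single k ?h1 ?h2] at h5
          case h1 =>
            intro b _ hb
            by_cases hbp : (b : ℕ) + 1 ≤ q + 1
            · rw [if_pos hbp]
              have hblt : (b : ℕ) < q := by
                have : (b : ℕ) ≠ q := fun hc => hb (Fin.ext (by omega))
                omega
              exact ih b hblt _
            · rw [if_neg hbp]
          case h2 => intro hc; exact absurd (Finset.mem_univ k) hc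
          rw [if_pos (by omega)] at h5
          have e0 : q + 1 - 1 - (k : ℕ) = 0 := by omega
          have e1 : (2 * N + 1) * (q + 1 - 1 - (k : ℕ)) + (i + 1 - 1) = i := by
            rw [e0]; omega
          rw [e1] at h5
          have e2 : (2 * N + 1) * (q + 1) + (i + 1) = ((2 * N + 1) * (q + 1) + i) + 1 := by
            omega
          rw [e2, Hx0 ((2 * N + 1) * (q + 1) + i), zero_add] at h5
          exact h5
        intro τ
        exact key_pow A f hbase τ
    refine ⟨fun τ => ?_, Hx0⟩
    ext i j
    have h := HB m j j.isLt τ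
    rw [Matrix.mulVec_single] at h
    simpa using congrFun h i
  · intro ⟨h1, h2⟩ p hp τ' ht1 ht2
    rw [key_eq p τ' ht1 ht2]
    obtain ⟨t, ht⟩ : ∃ t, τ' = t + 1 := ⟨τ' - 1, by omega⟩
    have e : (2 * N + 1) * p + τ' = ((2 * N + 1) * p + t) + 1 := by omega
    rw [e, h2 ((2 * N + 1) * p + t), zero_add]
    apply Finset.sum_eq_zero
    intro k _
    by_cases hkp : (k : ℕ) + 1 ≤ p
    · rw [if_pos hkp, h1 _, Matrix.zero_mulVec]
    · rw [if_neg hkp]
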